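/- Let n ≥ 3 be odd and set v = X^n Y^{4n+2} x³ + X^{2n+1}Y^{3n+1} x²y + X^{3n+1}Y^{2n+1} xy² + X^{4n+2}Y^n y³ ∈ V_{3,5n+2}, and w = Y^n x²y - X^n xy² ∈ V_{3,n}. Then: (a) T^{(3,n)}(v, w) = 0; (b) T^{(3,n)}(v, ·) : V_{3,n} → V_{0,4n+2} is surjective; (c) T^{(3,n)}(·, w) : V_{3,5n+2} → V_{0,4n+2} is surjective. -/
import Mathlib


open MvPolynomial

/-- Iterated partial derivative `∂^m/∂(X i)^m` on polynomials in four variables. -/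
noncomputable def pd (i : Fin 4) (m : ℕ) (f : MvPolynomial (Fin 4) ℂ) :
    MvPolynomial (Fin 4) ℂ :=
  (fun g => pderiv i g)^[m] f

/-- The `(r,s)`-th bi-transvectant of bi-forms of bidegrees `(a,b)` and `(a',b')`
in the variables `x = X 0`, `y = X 1` and `X = X 2`, `Y = X 3`:
on pure tensors it is `T^{(r)} ⊠ T^{(s)}`, and explicitly
`T^{(r,s)}(F,G) = ((a-r)!/a!)((a'-r)!/a'!)((b-s)!/b!)((b'-s)!/b'!) ·
  Σ_{k,l} (-1)^{k+l} binom(r,k) binom(s,l)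
    (∂_x^{r-k}∂_y^k ∂_X^{s-l}∂_Y^l F)(∂_x^k ∂_y^{r-k} ∂_X^l ∂_Y^{s-l} G)`. -/
noncomputable def biT (a b a' b' r s : ℕ) (F G : MvPolynomial (Fin 4) ℂ) :
    MvPolynomial (Fin 4) ℂ :=
  (((a - r).factorial : ℂ) / (a.factorial : ℂ) *
      (((a' - r).factorial : ℂ) / (a'.factorial : ℂ)) *
      (((b - s).factorial : ℂ) / (b.factorial : ℂ)) *
      (((b' - s).factorial : ℂ) / (b'.factorial : ℂ))) •
    ∑ k ∈ Finset.range (r + 1), ∑ l ∈ Finset.range (s + 1),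
      ((-1 : ℂ) ^ (k + l) * (r.choose k : ℂ) * (s.choose l : ℂ)) •
        (pd 0 (r - k) (pd 1 k (pd 2 (s - l) (pd 3 l F))) *
          pd 0 k (pd 1 (r - k) (pd 2 l (pd 3 (s - l) G))))

/-- The space `V_{a,b}` of bi-forms of bidegree `(a,b)` on `ℙ¹×ℙ¹`, realized as the
span of the monomials `x^i y^{a-i} X^j Y^{b-j}`. -/
noncomputable def Vab (a b : ℕ) : Submodule ℂ (MvPolynomial (Fin 4) ℂ) :=
  Submodule.span ℂ
    {p | ∃ i ≤ a, ∃ j ≤ b, p = X 0 ^ i * X 1 ^ (a - i) * X 2 ^ j * X 3 ^ (b - j)}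

lemma pd_zero (i : Fin 4) (f : MvPolynomial (Fin 4) ℂ) : pd i 0 f = f := rfl

lemma pd_succ' (i : Fin 4) (m : ℕ) (f : MvPolynomial (Fin 4) ℂ) :
    pd i (m+1) f = pderiv i (pd i m f) := Function.iterate_succ_apply' _ m f

lemma pd_add (i : Fin 4) (m : ℕ) (f g : MvPolynomial (Fin 4) ℂ) :
    pd i m (f + g) = pd i m f + pd i m g := by
  induction m with
  | zero => rfl
  | succ m ih => rw [pd_succ', pd_succ', pd_succ', ih, map_add]

lemma pd_smul (i : Fin 4) (m : ℕ) (c : ℂ) (f : MvPolynomial (Fin 4) ℂ) :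
    pd i m (c • f) = c • pd i m f := by
  induction m with
  | zero => rfl
  | succ m ih => rw [pd_succ', pd_succ', ih, Derivation.map_smul]

lemma pd_neg (i : Fin 4) (m : ℕ) (f : MvPolynomial (Fin 4) ℂ) :
    pd i m (-f) = - pd i m f := by
  induction m with
  | zero => rfl
  | succ m ih => rw [pd_succ', pd_succ', ih, map_neg]

lemma pd_mul_right (i : Fin 4) (m : ℕ) (f g : MvPolynomial (Fin 4) ℂ)
    (h : pderiv i g = 0) : pd i m (f * g) = pd i m f * g := by
  induction m with
  | zero => rfl
  | succ m ih => rw [pd_succ', ih, pderiv_mul, h, mul_zero, add_zero, pd_succ']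

lemma pd_mul_left (i : Fin 4) (m : ℕ) (f g : MvPolynomial (Fin 4) ℂ)
    (h : pderiv i g = 0) : pd i m (g * f) = g * pd i m f := by
  rw [mul_comm, pd_mul_right i m f g h, mul_comm]

lemma pderiv_X_pow_ne (i j : Fin 4) (e : ℕ) (h : j ≠ i) :
    pderiv i ((X j : MvPolynomial (Fin 4) ℂ) ^ e) = 0 := by
  rw [pderiv_pow, pderiv_X_of_ne h, mul_zero]

lemma pd_X_pow (i : Fin 4) (m e : ℕ) :
    pd i m ((X i : MvPolynomial (Fin 4) ℂ) ^ e) =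
      ((e.descFactorial m : ℕ) : ℂ) • X i ^ (e - m) := by
  induction m with
  | zero => simp [pd_zero]
  | succ m ih =>
      rw [pd_succ', ih, Derivation.map_smul, pderiv_pow, pderiv_X_self, mul_one]
      rcases le_or_gt (m+1) e with h | h
      · rw [Nat.descFactorial_succ, show e - m - 1 = e - (m+1) from by omega]
        simp only [smul_eq_C_mul, map_natCast, Nat.cast_mul, map_mul]
        ring
      · rcases Nat.lt_or_ge e m with h2 | h2
        · rw [Nat.descFactorial_eq_zero_iff_lt.mpr h2,
            Nat.descFactorial_eq_zero_iff_lt.mpr h]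
          simp
        · have : e = m := by omega
          subst this
          rw [Nat.descFactorial_eq_zero_iff_lt.mpr h]
          simp

lemma pd_quad (a b c d e0 e1 e2 e3 : ℕ) :
    pd 0 a (pd 1 b (pd 2 c (pd 3 d (X 0 ^ e0 * X 1 ^ e1 * X 2 ^ e2 * X 3 ^ e3)))) =
    ((e0.descFactorial a * e1.descFactorial b * e2.descFactorial c *
        e3.descFactorial d : ℕ) : ℂ) •
      (X 0 ^ (e0 - a) * X 1 ^ (e1 - b) * X 2 ^ (e2 - c) * X 3 ^ (e3 - d)) := by
  have n30 : (0:Fin 4) ≠ 3 := by decide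
  have n31 : (1:Fin 4) ≠ 3 := by decide
  have n32 : (2:Fin 4) ≠ 3 := by decide
  have n20 : (0:Fin 4) ≠ 2 := by decide
  have n21 : (1:Fin 4) ≠ 2 := by decide
  have n23 : (3:Fin 4) ≠ 2 := by decide
  have n10 : (0:Fin 4) ≠ 1 := by decide
  have n12 : (2:Fin 4) ≠ 1 := by decide
  have n13 : (3:Fin 4) ≠ 1 := by decide
  have n01 : (1:Fin 4) ≠ 0 := by decide
  have n02 : (2:Fin 4) ≠ 0 := by decide
  have n03 : (3:Fin 4) ≠ 0 := by decide
  have h3 : pd 3 d (X 0 ^ e0 * X 1 ^ e1 * X 2 ^ e2 * X 3 ^ e3 : MvPolynomial (Fin 4) ℂ)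
      = ((e3.descFactorial d : ℕ) : ℂ) • (X 0 ^ e0 * X 1 ^ e1 * X 2 ^ e2 * X 3 ^ (e3 - d)) := by
    rw [pd_mul_left 3 d (X 3 ^ e3) _ (by
      simp [pderiv_mul, pderiv_X_pow_ne _ _ _ n30, pderiv_X_pow_ne _ _ _ n31,
        pderiv_X_pow_ne _ _ _ n32]), pd_X_pow, mul_smul_comm]
  have h2 : ∀ f3, pd 2 c (X 0 ^ e0 * X 1 ^ e1 * X 2 ^ e2 * X 3 ^ f3 : MvPolynomial (Fin 4) ℂ)
      = ((e2.descFactorial c : ℕ) : ℂ) • (X 0 ^ e0 * X 1 ^ e1 * X 2 ^ (e2 - c) * X 3 ^ f3) := by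
    intro f3
    rw [pd_mul_right 2 c _ _ (pderiv_X_pow_ne _ _ _ n23),
      pd_mul_left 2 c (X 2 ^ e2) _ (by
        simp [pderiv_mul, pderiv_X_pow_ne _ _ _ n20, pderiv_X_pow_ne _ _ _ n21]),
      pd_X_pow, mul_smul_comm, smul_mul_assoc]
  have h1 : ∀ f2 f3, pd 1 b (X 0 ^ e0 * X 1 ^ e1 * X 2 ^ f2 * X 3 ^ f3 : MvPolynomial (Fin 4) ℂ)
      = ((e1.descFactorial b : ℕ) : ℂ) • (X 0 ^ e0 * X 1 ^ (e1 - b) * X 2 ^ f2 * X 3 ^ f3) := by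
    intro f2 f3
    rw [pd_mul_right 1 b _ _ (pderiv_X_pow_ne _ _ _ n13),
      pd_mul_right 1 b _ _ (pderiv_X_pow_ne _ _ _ n12),
      pd_mul_left 1 b (X 1 ^ e1) _ (pderiv_X_pow_ne _ _ _ n10),
      pd_X_pow, mul_smul_comm, smul_mul_assoc, smul_mul_assoc]
  have h0 : ∀ f1 f2 f3, pd 0 a (X 0 ^ e0 * X 1 ^ f1 * X 2 ^ f2 * X 3 ^ f3 : MvPolynomial (Fin 4) ℂ)
      = ((e0.descFactorial a : ℕ) : ℂ) • (X 0 ^ (e0 - a) * X 1 ^ f1 * X 2 ^ f2 * X 3 ^ f3) := by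
    intro f1 f2 f3
    rw [pd_mul_right 0 a _ _ (pderiv_X_pow_ne _ _ _ n03),
      pd_mul_right 0 a _ _ (pderiv_X_pow_ne _ _ _ n02),
      pd_mul_right 0 a _ _ (pderiv_X_pow_ne _ _ _ n01),
      pd_X_pow, smul_mul_assoc, smul_mul_assoc, smul_mul_assoc]
  rw [h3, pd_smul, h2, smul_smul, pd_smul, h1, smul_smul, pd_smul, h0, smul_smul]
  push_cast
  ring_nf

lemma biT_add_left (a b a' b' r s : ℕ) (F1 F2 G : MvPolynomial (Fin 4) ℂ) :
    biT a b a' b' r s (F1 + F2) G =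
      biT a b a' b' r s F1 G + biT a b a' b' r s F2 G := by
  simp [biT, pd_add, add_mul, smul_add, Finset.sum_add_distrib]

lemma biT_add_right (a b a' b' r s : ℕ) (F G1 G2 : MvPolynomial (Fin 4) ℂ) :
    biT a b a' b' r s F (G1 + G2) =
      biT a b a' b' r s F G1 + biT a b a' b' r s F G2 := by
  simp [biT, pd_add, mul_add, smul_add, Finset.sum_add_distrib]

lemma biT_smul_left (a b a' b' r s : ℕ) (c : ℂ) (F G : MvPolynomial (Fin 4) ℂ) :
    biT a b a' b' r s (c • F) G = c • biT a b a' b' r s F G := by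
  simp only [biT, pd_smul, smul_mul_assoc]
  conv_rhs => rw [smul_comm]
  congr 1
  rw [Finset.smul_sum]
  refine Finset.sum_congr rfl fun k _ => ?_
  rw [Finset.smul_sum]
  refine Finset.sum_congr rfl fun l _ => ?_
  rw [smul_comm]

lemma biT_smul_right (a b a' b' r s : ℕ) (c : ℂ) (F G : MvPolynomial (Fin 4) ℂ) :
    biT a b a' b' r s F (c • G) = c • biT a b a' b' r s F G := by
  simp only [biT, pd_smul, mul_smul_comm]
  conv_rhs => rw [smul_comm]
  congr 1
  rw [Finset.smul_sum]
  refine Finset.sum_congr rfl fun k _ => ?_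
  rw [Finset.smul_sum]
  refine Finset.sum_congr rfl fun l _ => ?_
  rw [smul_comm]

lemma biT_sub_right (a b a' b' r s : ℕ) (F G1 G2 : MvPolynomial (Fin 4) ℂ) :
    biT a b a' b' r s F (G1 - G2) =
      biT a b a' b' r s F G1 - biT a b a' b' r s F G2 := by
  rw [sub_eq_add_neg, sub_eq_add_neg, biT_add_right]
  congr 1
  rw [show (-G2) = (-1 : ℂ) • G2 by simp, biT_smul_right]
  simp

lemma biT_mono (n B i i' J J' : ℕ) (hi : i ≤ 3) (hJ' : J' ≤ n) :
    biT 3 B 3 n 3 n (X 0 ^ i * X 1 ^ (3 - i) * X 2 ^ J * X 3 ^ (B - J))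
      (X 0 ^ i' * X 1 ^ (3 - i') * X 2 ^ J' * X 3 ^ (n - J')) =
    ((((3:ℕ) - 3).factorial : ℂ) / ((3:ℕ).factorial : ℂ) *
        ((((3:ℕ) - 3).factorial : ℂ) / ((3:ℕ).factorial : ℂ)) *
        (((B - n).factorial : ℂ) / (B.factorial : ℂ)) *
        (((n - n).factorial : ℂ) / (n.factorial : ℂ)) *
      ((-1 : ℂ) ^ ((3 - i) + J') * ((3:ℕ).choose (3 - i) : ℂ) * (n.choose J' : ℂ)) *
      ((i.descFactorial (3 - (3 - i)) * (3 - i).descFactorial (3 - i) *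
          J.descFactorial (n - J') * (B - J).descFactorial J' : ℕ) : ℂ) *
      ((i'.descFactorial (3 - i) * (3 - i').descFactorial (3 - (3 - i)) *
          J'.descFactorial J' * (n - J').descFactorial (n - J') : ℕ) : ℂ)) •
      ((X 0 ^ (i - (3 - (3 - i))) * X 1 ^ ((3 - i) - (3 - i)) *
          X 2 ^ (J - (n - J')) * X 3 ^ ((B - J) - J')) *
        (X 0 ^ (i' - (3 - i)) * X 1 ^ ((3 - i') - (3 - (3 - i))) *
          X 2 ^ (J' - J') * X 3 ^ ((n - J') - (n - J')))) := by
  unfold biT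
  rw [Finset.sum_eq_single_of_mem (3 - i) (by simp; omega) (fun k hk hkne => ?_),
    Finset.sum_eq_single_of_mem J' (by simp; omega) (fun l hl hlne => ?_),
    pd_quad, pd_quad, smul_mul_smul_comm, smul_smul, smul_smul]
  · congr 1
    push_cast
    ring
  · -- inner: l ≠ J'
    rw [pd_quad, pd_quad]
    have hz : i'.descFactorial (3 - i) * (3 - i').descFactorial (3 - (3 - i)) *
        J'.descFactorial l * (n - J').descFactorial (n - l) = 0 := by
      rcases Nat.lt_or_ge l J' with h | h
      · rw [Nat.descFactorial_eq_zero_iff_lt.mpr (show n - J' < n - l by omega)]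
        ring
      · rw [Nat.descFactorial_eq_zero_iff_lt.mpr
          (show J' < l by omega)]
        ring
    rw [hz]
    simp
  · -- outer: k ≠ 3 - i
    refine Finset.sum_eq_zero fun l hl => ?_
    rw [pd_quad, pd_quad]
    have hz : i.descFactorial (3 - k) * (3 - i).descFactorial k *
        J.descFactorial (n - l) * (B - J).descFactorial l = 0 := by
      simp only [Finset.mem_range] at hk
      rcases Nat.lt_or_ge k (3 - i) with h | h
      · rw [Nat.descFactorial_eq_zero_iff_lt.mpr (show i < 3 - k by omega)]
        ring
      · rw [Nat.descFactorial_eq_zero_iff_lt.mpr (show 3 - i < k by omega)]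
        ring
    rw [hz]
    simp


set_option maxHeartbeats 2000000 in
/-- §4.3, case `b ≡ 2 (mod 5)`: for odd `n ≥ 3`, with
`v = XⁿY⁴ⁿ⁺² x³ + X²ⁿ⁺¹Y³ⁿ⁺¹ x²y + X³ⁿ⁺¹Y²ⁿ⁺¹ xy² + X⁴ⁿ⁺²Yⁿ y³ ∈ V_{3,5n+2}` and
`w = Yⁿ x²y − Xⁿ xy² ∈ V_{3,n}`, one has
(a) `T^{(3,n)}(v,w) = 0`;
(b) `T^{(3,n)}(v,·) : V_{3,n} → V_{0,4n+2}` is surjective;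
(c) `T^{(3,n)}(·,w) : V_{3,5n+2} → V_{0,4n+2}` is surjective. -/
theorem case_b2 (n : ℕ) (hn : Odd n) (hn3 : 3 ≤ n) :
    biT 3 (5 * n + 2) 3 n 3 n
        (X 2 ^ n * X 3 ^ (4 * n + 2) * X 0 ^ 3 +
          X 2 ^ (2 * n + 1) * X 3 ^ (3 * n + 1) * (X 0 ^ 2 * X 1) +
          X 2 ^ (3 * n + 1) * X 3 ^ (2 * n + 1) * (X 0 * X 1 ^ 2) +
          X 2 ^ (4 * n + 2) * X 3 ^ n * X 1 ^ 3)
        (X 3 ^ n * (X 0 ^ 2 * X 1) - X 2 ^ n * (X 0 * X 1 ^ 2)) = 0 ∧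
    (∀ u ∈ Vab 0 (4 * n + 2), ∃ g ∈ Vab 3 n,
      biT 3 (5 * n + 2) 3 n 3 n
        (X 2 ^ n * X 3 ^ (4 * n + 2) * X 0 ^ 3 +
          X 2 ^ (2 * n + 1) * X 3 ^ (3 * n + 1) * (X 0 ^ 2 * X 1) +
          X 2 ^ (3 * n + 1) * X 3 ^ (2 * n + 1) * (X 0 * X 1 ^ 2) +
          X 2 ^ (4 * n + 2) * X 3 ^ n * X 1 ^ 3)
        g = u) ∧
    (∀ u ∈ Vab 0 (4 * n + 2), ∃ p ∈ Vab 3 (5 * n + 2),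
      biT 3 (5 * n + 2) 3 n 3 n p
        (X 3 ^ n * (X 0 ^ 2 * X 1) - X 2 ^ n * (X 0 * X 1 ^ 2)) = u) := by
  refine ⟨?_, ?_, ?_⟩
  · -- part (a)
    have e3 : (X 2 ^ n * X 3 ^ (4*n+2) * X 0 ^ 3 : MvPolynomial (Fin 4) ℂ)
        = X 0 ^ 3 * X 1 ^ (3-3) * X 2 ^ n * X 3 ^ (5*n+2-n) := by
      rw [show (3:ℕ)-3 = 0 from rfl, show 5*n+2-n = 4*n+2 from by omega]; ring
    have e2 : (X 2 ^ (2*n+1) * X 3 ^ (3*n+1) * (X 0 ^ 2 * X 1) : MvPolynomial (Fin 4) ℂ)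
        = X 0 ^ 2 * X 1 ^ (3-2) * X 2 ^ (2*n+1) * X 3 ^ (5*n+2-(2*n+1)) := by
      rw [show (3:ℕ)-2 = 1 from rfl, show 5*n+2-(2*n+1) = 3*n+1 from by omega]; ring
    have e1 : (X 2 ^ (3*n+1) * X 3 ^ (2*n+1) * (X 0 * X 1 ^ 2) : MvPolynomial (Fin 4) ℂ)
        = X 0 ^ 1 * X 1 ^ (3-1) * X 2 ^ (3*n+1) * X 3 ^ (5*n+2-(3*n+1)) := by
      rw [show (3:ℕ)-1 = 2 from rfl, show 5*n+2-(3*n+1) = 2*n+1 from by omega]; ring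
    have e0 : (X 2 ^ (4*n+2) * X 3 ^ n * X 1 ^ 3 : MvPolynomial (Fin 4) ℂ)
        = X 0 ^ 0 * X 1 ^ (3-0) * X 2 ^ (4*n+2) * X 3 ^ (5*n+2-(4*n+2)) := by
      rw [show (3:ℕ)-0 = 3 from rfl, show 5*n+2-(4*n+2) = n from by omega]; ring
    have g2 : (X 3 ^ n * (X 0 ^ 2 * X 1) : MvPolynomial (Fin 4) ℂ)
        = X 0 ^ 2 * X 1 ^ (3-2) * X 2 ^ 0 * X 3 ^ (n-0) := by
      rw [show (3:ℕ)-2 = 1 from rfl, Nat.sub_zero]; ring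
    have g1 : (X 2 ^ n * (X 0 * X 1 ^ 2) : MvPolynomial (Fin 4) ℂ)
        = X 0 ^ 1 * X 1 ^ (3-1) * X 2 ^ n * X 3 ^ (n-n) := by
      rw [show (3:ℕ)-1 = 2 from rfl, Nat.sub_self]; ring
    rw [e3, e2, e1, e0, g2, g1, biT_add_left, biT_add_left, biT_add_left,
      biT_sub_right, biT_sub_right, biT_sub_right, biT_sub_right,
      biT_mono n (5*n+2) 3 2 n 0 (by omega) (by omega),
      biT_mono n (5*n+2) 3 1 n n (by omega) (by omega),
      biT_mono n (5*n+2) 2 2 (2*n+1) 0 (by omega) (by omega),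
      biT_mono n (5*n+2) 2 1 (2*n+1) n (by omega) (by omega),
      biT_mono n (5*n+2) 1 2 (3*n+1) 0 (by omega) (by omega),
      biT_mono n (5*n+2) 1 1 (3*n+1) n (by omega) (by omega),
      biT_mono n (5*n+2) 0 2 (4*n+2) 0 (by omega) (by omega),
      biT_mono n (5*n+2) 0 1 (4*n+2) n (by omega) (by omega)]
    norm_num [Nat.descFactorial]
    rw [show 5*n+2-(2*n+1) = 3*n+1 from by omega, show 3*n+1-n = 2*n+1 from by omega,
      show 5*n+2-(3*n+1) = 2*n+1 from by omega, show 1+n = n+1 from by omega,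
      Even.neg_one_pow hn.add_one]
    module
  · -- part (b)
    have e3 : (X 2 ^ n * X 3 ^ (4*n+2) * X 0 ^ 3 : MvPolynomial (Fin 4) ℂ)
        = X 0 ^ 3 * X 1 ^ (3-3) * X 2 ^ n * X 3 ^ (5*n+2-n) := by
      rw [show (3:ℕ)-3 = 0 from rfl, show 5*n+2-n = 4*n+2 from by omega]; ring
    have e2 : (X 2 ^ (2*n+1) * X 3 ^ (3*n+1) * (X 0 ^ 2 * X 1) : MvPolynomial (Fin 4) ℂ)
        = X 0 ^ 2 * X 1 ^ (3-2) * X 2 ^ (2*n+1) * X 3 ^ (5*n+2-(2*n+1)) := by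
      rw [show (3:ℕ)-2 = 1 from rfl, show 5*n+2-(2*n+1) = 3*n+1 from by omega]; ring
    have e1 : (X 2 ^ (3*n+1) * X 3 ^ (2*n+1) * (X 0 * X 1 ^ 2) : MvPolynomial (Fin 4) ℂ)
        = X 0 ^ 1 * X 1 ^ (3-1) * X 2 ^ (3*n+1) * X 3 ^ (5*n+2-(3*n+1)) := by
      rw [show (3:ℕ)-1 = 2 from rfl, show 5*n+2-(3*n+1) = 2*n+1 from by omega]; ring
    have e0 : (X 2 ^ (4*n+2) * X 3 ^ n * X 1 ^ 3 : MvPolynomial (Fin 4) ℂ)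
        = X 0 ^ 0 * X 1 ^ (3-0) * X 2 ^ (4*n+2) * X 3 ^ (5*n+2-(4*n+2)) := by
      rw [show (3:ℕ)-0 = 3 from rfl, show 5*n+2-(4*n+2) = n from by omega]; ring
    intro u hu
    induction hu using Submodule.span_induction with
    | zero =>
        refine ⟨0, Submodule.zero_mem _, ?_⟩
        rw [show (0 : MvPolynomial (Fin 4) ℂ) = (0:ℂ) • 0 from by simp, biT_smul_right]
        simp
    | add x y hx hy ihx ihy =>
        obtain ⟨g1, hg1, h1⟩ := ihx
        obtain ⟨g2, hg2, h2⟩ := ihy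
        exact ⟨g1 + g2, Submodule.add_mem _ hg1 hg2, by rw [biT_add_right, h1, h2]⟩
    | smul c x hx ihx =>
        obtain ⟨g, hg, h⟩ := ihx
        exact ⟨c • g, Submodule.smul_mem _ _ hg, by rw [biT_smul_right, h]⟩
    | mem p hp =>
        obtain ⟨i, hi, j, hj, rfl⟩ := hp
        have hi0 : i = 0 := by omega
        subst hi0
        rcases Nat.lt_or_ge j (n+1) with hc | hc
        · -- i' = 0, J' = j
          set s : ℂ := ((Nat.factorial 3 : ℂ))⁻¹ * ((Nat.factorial 3 : ℂ))⁻¹ *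
            (((4*n+2).factorial : ℂ) / ((5*n+2).factorial : ℂ)) * ((n.factorial : ℂ))⁻¹ *
            ((-1)^j * (n.choose j : ℂ)) *
            (6 * (n.descFactorial (n-j) : ℂ) * (((4*n+2).descFactorial j : ℂ))) *
            (6 * ((j.descFactorial j : ℂ)) * (((n-j).descFactorial (n-j) : ℂ))) with hsdef
          have hs : s ≠ 0 := by
            rw [hsdef]
            have h6 : ((Nat.factorial 3 : ℂ)) ≠ 0 := by norm_num [Nat.factorial]
            refine mul_ne_zero (mul_ne_zero (mul_ne_zero (mul_ne_zero (mul_ne_zero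
              (mul_ne_zero (inv_ne_zero h6) (inv_ne_zero h6)) ?_) ?_) ?_) ?_) ?_
            · exact div_ne_zero (by exact_mod_cast (4*n+2).factorial_ne_zero)
                (by exact_mod_cast (5*n+2).factorial_ne_zero)
            · exact inv_ne_zero (by exact_mod_cast n.factorial_ne_zero)
            · exact mul_ne_zero (pow_ne_zero _ (by norm_num))
                (by exact_mod_cast (Nat.choose_pos (by omega)).ne')
            · refine mul_ne_zero (mul_ne_zero (by norm_num) ?_) ?_ <;>
                · rw [Ne, Nat.cast_eq_zero, Nat.descFactorial_eq_zero_iff_lt]; omega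
            · refine mul_ne_zero (mul_ne_zero (by norm_num) ?_) ?_ <;>
                · rw [Ne, Nat.cast_eq_zero, Nat.descFactorial_eq_zero_iff_lt]; omega
          have hT : biT 3 (5*n+2) 3 n 3 n
              (X 2 ^ n * X 3 ^ (4*n+2) * X 0 ^ 3 +
                X 2 ^ (2*n+1) * X 3 ^ (3*n+1) * (X 0 ^ 2 * X 1) +
                X 2 ^ (3*n+1) * X 3 ^ (2*n+1) * (X 0 * X 1 ^ 2) +
                X 2 ^ (4*n+2) * X 3 ^ n * X 1 ^ 3)
              (X 0 ^ 0 * X 1 ^ (3-0) * X 2 ^ j * X 3 ^ (n-j)) =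
              s • (X 0 ^ 0 * X 1 ^ (0-0) * X 2 ^ j * X 3 ^ (4*n+2-j)) := by
            rw [e3, e2, e1, e0, biT_add_left, biT_add_left, biT_add_left,
              biT_mono n (5*n+2) 3 0 n j (by omega) (by omega),
              biT_mono n (5*n+2) 2 0 (2*n+1) j (by omega) (by omega),
              biT_mono n (5*n+2) 1 0 (3*n+1) j (by omega) (by omega),
              biT_mono n (5*n+2) 0 0 (4*n+2) j (by omega) (by omega), hsdef]
            rw [show 5*n+2-n = 4*n+2 from by omega, show n-(n-j) = j from by omega]
            norm_num [Nat.descFactorial]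
          refine ⟨s⁻¹ • (X 0 ^ 0 * X 1 ^ (3-0) * X 2 ^ j * X 3 ^ (n-j)),
            Submodule.smul_mem _ _ (Submodule.subset_span ⟨0, by omega, j, by omega, rfl⟩), ?_⟩
          rw [biT_smul_right, hT, smul_smul, inv_mul_cancel₀ hs, one_smul]
        rcases Nat.lt_or_ge j (2*n+2) with hc2 | hc2
        · -- i' = 1, J' = (j-(n+1))
          set s : ℂ := ((Nat.factorial 3 : ℂ))⁻¹ * ((Nat.factorial 3 : ℂ))⁻¹ *
            (((4*n+2).factorial : ℂ) / ((5*n+2).factorial : ℂ)) * ((n.factorial : ℂ))⁻¹ *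
            ((-1)^((1+(j-(n+1)))) * ((3:ℕ) : ℂ) * (n.choose ((j-(n+1))) : ℂ)) *
            ((2 : ℂ) * (((2*n+1)).descFactorial (n-((j-(n+1)))) : ℂ) * ((((3*n+1)).descFactorial ((j-(n+1))) : ℂ))) *
            ((2 : ℂ) * ((((j-(n+1))).descFactorial ((j-(n+1))) : ℂ)) * (((n-((j-(n+1)))).descFactorial (n-((j-(n+1)))) : ℂ))) with hsdef
          have hs : s ≠ 0 := by
            rw [hsdef]
            have h6 : ((Nat.factorial 3 : ℂ)) ≠ 0 := by norm_num [Nat.factorial]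
            refine mul_ne_zero (mul_ne_zero (mul_ne_zero (mul_ne_zero (mul_ne_zero
              (mul_ne_zero (inv_ne_zero h6) (inv_ne_zero h6)) ?_) ?_) ?_) ?_) ?_
            · exact div_ne_zero (by exact_mod_cast (4*n+2).factorial_ne_zero)
                (by exact_mod_cast (5*n+2).factorial_ne_zero)
            · exact inv_ne_zero (by exact_mod_cast n.factorial_ne_zero)
            · refine mul_ne_zero (mul_ne_zero (pow_ne_zero _ (by norm_num)) (by norm_num)) ?_
              exact_mod_cast (Nat.choose_pos (by omega)).ne'
            · refine mul_ne_zero (mul_ne_zero (by norm_num) ?_) ?_ <;>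
                · rw [Ne, Nat.cast_eq_zero, Nat.descFactorial_eq_zero_iff_lt]; omega
            · refine mul_ne_zero (mul_ne_zero (by norm_num) ?_) ?_ <;>
                · rw [Ne, Nat.cast_eq_zero, Nat.descFactorial_eq_zero_iff_lt]; omega
          have hT : biT 3 (5*n+2) 3 n 3 n
              (X 2 ^ n * X 3 ^ (4*n+2) * X 0 ^ 3 +
                X 2 ^ (2*n+1) * X 3 ^ (3*n+1) * (X 0 ^ 2 * X 1) +
                X 2 ^ (3*n+1) * X 3 ^ (2*n+1) * (X 0 * X 1 ^ 2) +
                X 2 ^ (4*n+2) * X 3 ^ n * X 1 ^ 3)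
              (X 0 ^ 1 * X 1 ^ (3-1) * X 2 ^ ((j-(n+1))) * X 3 ^ (n-((j-(n+1))))) =
              s • (X 0 ^ 0 * X 1 ^ (0-0) * X 2 ^ j * X 3 ^ (4*n+2-j)) := by
            rw [e3, e2, e1, e0, biT_add_left, biT_add_left, biT_add_left,
              biT_mono n (5*n+2) 3 1 n ((j-(n+1))) (by omega) (by omega),
              biT_mono n (5*n+2) 2 1 (2*n+1) ((j-(n+1))) (by omega) (by omega),
              biT_mono n (5*n+2) 1 1 (3*n+1) ((j-(n+1))) (by omega) (by omega),
              biT_mono n (5*n+2) 0 1 (4*n+2) ((j-(n+1))) (by omega) (by omega), hsdef]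
            rw [show 5*n+2-n = 4*n+2 from by omega, show 5*n+2-(2*n+1) = 3*n+1 from by omega,
              show (2*n+1)-(n-(j-(n+1))) = j from by omega, show 3*n+1-(j-(n+1)) = 4*n+2-j from by omega]
            norm_num [Nat.descFactorial]
            try module
          refine ⟨s⁻¹ • (X 0 ^ 1 * X 1 ^ (3-1) * X 2 ^ ((j-(n+1))) * X 3 ^ (n-((j-(n+1))))),
            Submodule.smul_mem _ _ (Submodule.subset_span ⟨1, by omega, (j-(n+1)), by omega, rfl⟩), ?_⟩
          rw [biT_smul_right, hT, smul_smul, inv_mul_cancel₀ hs, one_smul]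
        rcases Nat.lt_or_ge j (3*n+2) with hc3 | hc3
        · -- i' = 2, J' = (j-(2*n+1))
          set s : ℂ := ((Nat.factorial 3 : ℂ))⁻¹ * ((Nat.factorial 3 : ℂ))⁻¹ *
            (((4*n+2).factorial : ℂ) / ((5*n+2).factorial : ℂ)) * ((n.factorial : ℂ))⁻¹ *
            ((-1)^((2+(j-(2*n+1)))) * ((3:ℕ) : ℂ) * (n.choose ((j-(2*n+1))) : ℂ)) *
            ((2 : ℂ) * (((3*n+1)).descFactorial (n-((j-(2*n+1)))) : ℂ) * ((((2*n+1)).descFactorial ((j-(2*n+1))) : ℂ))) *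
            ((2 : ℂ) * ((((j-(2*n+1))).descFactorial ((j-(2*n+1))) : ℂ)) * (((n-((j-(2*n+1)))).descFactorial (n-((j-(2*n+1)))) : ℂ))) with hsdef
          have hs : s ≠ 0 := by
            rw [hsdef]
            have h6 : ((Nat.factorial 3 : ℂ)) ≠ 0 := by norm_num [Nat.factorial]
            refine mul_ne_zero (mul_ne_zero (mul_ne_zero (mul_ne_zero (mul_ne_zero
              (mul_ne_zero (inv_ne_zero h6) (inv_ne_zero h6)) ?_) ?_) ?_) ?_) ?_
            · exact div_ne_zero (by exact_mod_cast (4*n+2).factorial_ne_zero)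
                (by exact_mod_cast (5*n+2).factorial_ne_zero)
            · exact inv_ne_zero (by exact_mod_cast n.factorial_ne_zero)
            · refine mul_ne_zero (mul_ne_zero (pow_ne_zero _ (by norm_num)) (by norm_num)) ?_
              exact_mod_cast (Nat.choose_pos (by omega)).ne'
            · refine mul_ne_zero (mul_ne_zero (by norm_num) ?_) ?_ <;>
                · rw [Ne, Nat.cast_eq_zero, Nat.descFactorial_eq_zero_iff_lt]; omega
            · refine mul_ne_zero (mul_ne_zero (by norm_num) ?_) ?_ <;>
                · rw [Ne, Nat.cast_eq_zero, Nat.descFactorial_eq_zero_iff_lt]; omega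
          have hT : biT 3 (5*n+2) 3 n 3 n
              (X 2 ^ n * X 3 ^ (4*n+2) * X 0 ^ 3 +
                X 2 ^ (2*n+1) * X 3 ^ (3*n+1) * (X 0 ^ 2 * X 1) +
                X 2 ^ (3*n+1) * X 3 ^ (2*n+1) * (X 0 * X 1 ^ 2) +
                X 2 ^ (4*n+2) * X 3 ^ n * X 1 ^ 3)
              (X 0 ^ 2 * X 1 ^ (3-2) * X 2 ^ ((j-(2*n+1))) * X 3 ^ (n-((j-(2*n+1))))) =
              s • (X 0 ^ 0 * X 1 ^ (0-0) * X 2 ^ j * X 3 ^ (4*n+2-j)) := by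
            rw [e3, e2, e1, e0, biT_add_left, biT_add_left, biT_add_left,
              biT_mono n (5*n+2) 3 2 n ((j-(2*n+1))) (by omega) (by omega),
              biT_mono n (5*n+2) 2 2 (2*n+1) ((j-(2*n+1))) (by omega) (by omega),
              biT_mono n (5*n+2) 1 2 (3*n+1) ((j-(2*n+1))) (by omega) (by omega),
              biT_mono n (5*n+2) 0 2 (4*n+2) ((j-(2*n+1))) (by omega) (by omega), hsdef]
            rw [show 5*n+2-n = 4*n+2 from by omega, show 5*n+2-(3*n+1) = 2*n+1 from by omega,
              show (3*n+1)-(n-(j-(2*n+1))) = j from by omega, show 2*n+1-(j-(2*n+1)) = 4*n+2-j from by omega]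
            norm_num [Nat.descFactorial]
            try module
          refine ⟨s⁻¹ • (X 0 ^ 2 * X 1 ^ (3-2) * X 2 ^ ((j-(2*n+1))) * X 3 ^ (n-((j-(2*n+1))))),
            Submodule.smul_mem _ _ (Submodule.subset_span ⟨2, by omega, (j-(2*n+1)), by omega, rfl⟩), ?_⟩
          rw [biT_smul_right, hT, smul_smul, inv_mul_cancel₀ hs, one_smul]
        · -- i' = 3, J' = (j-(3*n+2))
          set s : ℂ := ((Nat.factorial 3 : ℂ))⁻¹ * ((Nat.factorial 3 : ℂ))⁻¹ *
            (((4*n+2).factorial : ℂ) / ((5*n+2).factorial : ℂ)) * ((n.factorial : ℂ))⁻¹ *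
            ((-1)^((3+(j-(3*n+2)))) * ((1:ℕ) : ℂ) * (n.choose ((j-(3*n+2))) : ℂ)) *
            ((6 : ℂ) * (((4*n+2)).descFactorial (n-((j-(3*n+2)))) : ℂ) * (((n).descFactorial ((j-(3*n+2))) : ℂ))) *
            ((6 : ℂ) * ((((j-(3*n+2))).descFactorial ((j-(3*n+2))) : ℂ)) * (((n-((j-(3*n+2)))).descFactorial (n-((j-(3*n+2)))) : ℂ))) with hsdef
          have hs : s ≠ 0 := by
            rw [hsdef]
            have h6 : ((Nat.factorial 3 : ℂ)) ≠ 0 := by norm_num [Nat.factorial]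
            refine mul_ne_zero (mul_ne_zero (mul_ne_zero (mul_ne_zero (mul_ne_zero
              (mul_ne_zero (inv_ne_zero h6) (inv_ne_zero h6)) ?_) ?_) ?_) ?_) ?_
            · exact div_ne_zero (by exact_mod_cast (4*n+2).factorial_ne_zero)
                (by exact_mod_cast (5*n+2).factorial_ne_zero)
            · exact inv_ne_zero (by exact_mod_cast n.factorial_ne_zero)
            · refine mul_ne_zero (mul_ne_zero (pow_ne_zero _ (by norm_num)) (by norm_num)) ?_
              exact_mod_cast (Nat.choose_pos (by omega)).ne'
            · refine mul_ne_zero (mul_ne_zero (by norm_num) ?_) ?_ <;>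
                · rw [Ne, Nat.cast_eq_zero, Nat.descFactorial_eq_zero_iff_lt]; omega
            · refine mul_ne_zero (mul_ne_zero (by norm_num) ?_) ?_ <;>
                · rw [Ne, Nat.cast_eq_zero, Nat.descFactorial_eq_zero_iff_lt]; omega
          have hT : biT 3 (5*n+2) 3 n 3 n
              (X 2 ^ n * X 3 ^ (4*n+2) * X 0 ^ 3 +
                X 2 ^ (2*n+1) * X 3 ^ (3*n+1) * (X 0 ^ 2 * X 1) +
                X 2 ^ (3*n+1) * X 3 ^ (2*n+1) * (X 0 * X 1 ^ 2) +
                X 2 ^ (4*n+2) * X 3 ^ n * X 1 ^ 3)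
              (X 0 ^ 3 * X 1 ^ (3-3) * X 2 ^ ((j-(3*n+2))) * X 3 ^ (n-((j-(3*n+2))))) =
              s • (X 0 ^ 0 * X 1 ^ (0-0) * X 2 ^ j * X 3 ^ (4*n+2-j)) := by
            rw [e3, e2, e1, e0, biT_add_left, biT_add_left, biT_add_left,
              biT_mono n (5*n+2) 3 3 n ((j-(3*n+2))) (by omega) (by omega),
              biT_mono n (5*n+2) 2 3 (2*n+1) ((j-(3*n+2))) (by omega) (by omega),
              biT_mono n (5*n+2) 1 3 (3*n+1) ((j-(3*n+2))) (by omega) (by omega),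
              biT_mono n (5*n+2) 0 3 (4*n+2) ((j-(3*n+2))) (by omega) (by omega), hsdef]
            rw [show 5*n+2-n = 4*n+2 from by omega, show 5*n+2-(4*n+2) = n from by omega,
              show (4*n+2)-(n-(j-(3*n+2))) = j from by omega, show n-(j-(3*n+2)) = 4*n+2-j from by omega]
            norm_num [Nat.descFactorial]
            try module
          refine ⟨s⁻¹ • (X 0 ^ 3 * X 1 ^ (3-3) * X 2 ^ ((j-(3*n+2))) * X 3 ^ (n-((j-(3*n+2))))),
            Submodule.smul_mem _ _ (Submodule.subset_span ⟨3, by omega, (j-(3*n+2)), by omega, rfl⟩), ?_⟩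
          rw [biT_smul_right, hT, smul_smul, inv_mul_cancel₀ hs, one_smul]
  · -- part (c)
    have g2 : (X 3 ^ n * (X 0 ^ 2 * X 1) : MvPolynomial (Fin 4) ℂ)
        = X 0 ^ 2 * X 1 ^ (3-2) * X 2 ^ 0 * X 3 ^ (n-0) := by
      rw [show (3:ℕ)-2 = 1 from rfl, Nat.sub_zero]; ring
    have g1 : (X 2 ^ n * (X 0 * X 1 ^ 2) : MvPolynomial (Fin 4) ℂ)
        = X 0 ^ 1 * X 1 ^ (3-1) * X 2 ^ n * X 3 ^ (n-n) := by
      rw [show (3:ℕ)-1 = 2 from rfl, Nat.sub_self]; ring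
    intro u hu
    induction hu using Submodule.span_induction with
    | zero =>
        refine ⟨0, Submodule.zero_mem _, ?_⟩
        rw [show (0 : MvPolynomial (Fin 4) ℂ) = (0:ℂ) • 0 from by simp, biT_smul_left]
        simp
    | add x y hx hy ihx ihy =>
        obtain ⟨g1', hg1, h1⟩ := ihx
        obtain ⟨g2', hg2, h2⟩ := ihy
        exact ⟨g1' + g2', Submodule.add_mem _ hg1 hg2, by rw [biT_add_left, h1, h2]⟩
    | smul c x hx ihx =>
        obtain ⟨g, hg, h⟩ := ihx
        exact ⟨c • g, Submodule.smul_mem _ _ hg, by rw [biT_smul_left, h]⟩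
    | mem p hp =>
        obtain ⟨i, hi, j, hj, rfl⟩ := hp
        have hi0 : i = 0 := by omega
        subst hi0
        set s : ℂ := -(((Nat.factorial 3 : ℂ))⁻¹ * ((Nat.factorial 3 : ℂ))⁻¹ *
          (((4*n+2).factorial : ℂ) / ((5*n+2).factorial : ℂ)) * ((n.factorial : ℂ))⁻¹ *
          ((-1)^(1+n) * (3:ℂ) * (n.choose n : ℂ)) *
          ((2:ℂ) * (j.descFactorial (n-n) : ℂ) * (((5*n+2-j).descFactorial n : ℂ))) *
          ((2:ℂ) * ((n.descFactorial n : ℂ)) * (((n-n).descFactorial (n-n) : ℂ)))) with hsdef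
        have hs : s ≠ 0 := by
          rw [hsdef, neg_ne_zero]
          have h6 : ((Nat.factorial 3 : ℂ)) ≠ 0 := by norm_num [Nat.factorial]
          refine mul_ne_zero (mul_ne_zero (mul_ne_zero (mul_ne_zero (mul_ne_zero
            (mul_ne_zero (inv_ne_zero h6) (inv_ne_zero h6)) ?_) ?_) ?_) ?_) ?_
          · exact div_ne_zero (by exact_mod_cast (4*n+2).factorial_ne_zero)
              (by exact_mod_cast (5*n+2).factorial_ne_zero)
          · exact inv_ne_zero (by exact_mod_cast n.factorial_ne_zero)
          · refine mul_ne_zero (mul_ne_zero (pow_ne_zero _ (by norm_num)) (by norm_num)) ?_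
            exact_mod_cast (Nat.choose_pos (by omega)).ne'
          · refine mul_ne_zero (mul_ne_zero (by norm_num) ?_) ?_ <;>
              · rw [Ne, Nat.cast_eq_zero, Nat.descFactorial_eq_zero_iff_lt]; omega
          · refine mul_ne_zero (mul_ne_zero (by norm_num) ?_) ?_ <;>
              · rw [Ne, Nat.cast_eq_zero, Nat.descFactorial_eq_zero_iff_lt]; omega
        have hT : biT 3 (5*n+2) 3 n 3 n
            (X 0 ^ 2 * X 1 ^ (3-2) * X 2 ^ j * X 3 ^ (5*n+2-j))
            (X 3 ^ n * (X 0 ^ 2 * X 1) - X 2 ^ n * (X 0 * X 1 ^ 2)) =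
            s • (X 0 ^ 0 * X 1 ^ (0-0) * X 2 ^ j * X 3 ^ (4*n+2-j)) := by
          rw [g2, g1, biT_sub_right,
            biT_mono n (5*n+2) 2 2 j 0 (by omega) (by omega),
            biT_mono n (5*n+2) 2 1 j n (by omega) (by omega), hsdef]
          rw [show 5*n+2-n = 4*n+2 from by omega, show 5*n+2-j-n = 4*n+2-j from by omega]
          norm_num [Nat.descFactorial]
          try module
        refine ⟨s⁻¹ • (X 0 ^ 2 * X 1 ^ (3-2) * X 2 ^ j * X 3 ^ (5*n+2-j)),
          Submodule.smul_mem _ _ (Submodule.subset_span ⟨2, by omega, j, by omega, rfl⟩), ?_⟩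
        rw [biT_smul_left, hT, smul_smul, inv_mul_cancel₀ hs, one_smul]
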